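/- In the category of supported sets, a monomorphism is regular (an equalizer) if and only if it is support-reflecting; moreover, the supported map t: 1 → 2 sending 0 to 1 (where 1 and 2 carry empty supports) is a regular-subobject classifier: for every support-reflecting monomorphism m: S → X there is a unique supported map χ: X → 2 making the square with m, the unique map S → 1, and t a pullback. -/

import Mathlib

open CategoryTheory

/-- A supported set over `A`: a set with a finite support for each element. -/
structure SuppSet (A : Type) : Type 1 where
  carrier : Type
  supp : carrier → Set A
  finite : ∀ x, (supp x).Finite

variable {A : Type}

instance : Category (SuppSet A) where
  Hom X Y := {f : X.carrier → Y.carrier // ∀ x, Y.supp (f x) ⊆ X.supp x}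
  id _ := ⟨fun x => x, fun _ => subset_rfl⟩
  comp f g := ⟨fun x => g.1 (f.1 x), fun x => (g.2 _).trans (f.2 x)⟩
  id_comp _ := Subtype.ext rfl
  comp_id _ := Subtype.ext rfl
  assoc _ _ _ := Subtype.ext rfl

/-- The forgetful functor from supported sets to sets. -/
def Forget (A : Type) : SuppSet A ⥤ Type where
  obj X := X.carrier
  map f := TypeCat.ofHom f.1
  map_id _ := rfl
  map_comp _ _ := rfl

/-- The terminal supported set `1 = {0}` with empty support. -/
def oneObj (A : Type) : SuppSet A where
  carrier := PUnit
  supp := fun _ => ∅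
  finite := fun _ => Set.finite_empty

/-- The supported set `2 = {0,1}` with empty supports. -/
def twoObj (A : Type) : SuppSet A where
  carrier := Bool
  supp := fun _ => ∅
  finite := fun _ => Set.finite_empty

/-- The truth map `t : 1 → 2`. -/
def tMap (A : Type) : oneObj A ⟶ twoObj A := ⟨fun _ => true, fun _ => subset_rfl⟩

/-- The unique map to `1`. -/
def bangMap (S : SuppSet A) : S ⟶ oneObj A := ⟨fun _ => PUnit.unit, fun _ => Set.empty_subset _⟩

open Limits

/-- A one-point supported set with prescribed (finite) support. -/
def ptObj (A : Type) (U : Set A) (h : U.Finite) : SuppSet A where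
  carrier := PUnit
  supp := fun _ => U
  finite := fun _ => h

lemma mono_inj {S X : SuppSet A} (m : S ⟶ X) (hm : Mono m) :
    Function.Injective m.1 := by
  intro s₁ s₂ h
  let P := ptObj A (S.supp s₁ ∪ S.supp s₂) ((S.finite s₁).union (S.finite s₂))
  let f₁ : P ⟶ S := ⟨fun _ => s₁, fun _ => Set.subset_union_left⟩
  let f₂ : P ⟶ S := ⟨fun _ => s₂, fun _ => Set.subset_union_right⟩
  have : f₁ ≫ m = f₂ ≫ m := Subtype.ext (funext fun _ => h)
  have := (cancel_mono m).mp this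
  exact congrFun (congrArg Subtype.val this) PUnit.unit

/-- The constant-true map. -/
def trueMap (X : SuppSet A) : X ⟶ twoObj A := ⟨fun _ => true, fun _ => Set.empty_subset _⟩

/-- The characteristic map of a mono. -/
noncomputable def chiMap {S X : SuppSet A} (m : S ⟶ X) : X ⟶ twoObj A :=
  ⟨fun x => @decide (∃ s, m.1 s = x) (Classical.propDecidable _), fun _ => Set.empty_subset _⟩

lemma chi_true {S X : SuppSet A} (m : S ⟶ X) (x : X.carrier) :
    (chiMap m).1 x = true ↔ ∃ s, m.1 s = x :=
  ⟨@of_decide_eq_true _ (Classical.propDecidable _), @decide_eq_true _ (Classical.propDecidable _)⟩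

lemma snd_mem_range {S X : SuppSet A} (m : S ⟶ X)
    (c : Limits.PullbackCone (tMap A) (chiMap m)) (w : c.pt.carrier) :
    ∃ s, m.1 s = c.snd.1 w :=
  (chi_true m _).mp (congrFun (congrArg Subtype.val c.condition) w).symm

/-- In `Supp(A)` a monomorphism is regular (an equalizer) iff it is
support-reflecting, and `t : 1 → 2` is a regular-subobject classifier: every
support-reflecting monomorphism `m : S → X` has a unique characteristic map
`χ : X → 2` making the square a pullback. -/
theorem suppSet_regularMono_iff_and_classifier (A : Type) :
    (∀ (S X : SuppSet A) (m : S ⟶ X), Mono m →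
      (Nonempty (RegularMono m) ↔ ∀ s, X.supp (m.1 s) = S.supp s)) ∧
    (∀ (S X : SuppSet A) (m : S ⟶ X), Mono m →
      (∀ s, X.supp (m.1 s) = S.supp s) →
      ∃! χ : X ⟶ twoObj A, IsPullback (bangMap S) m (tMap A) χ) := by
  -- support-reflecting mono is regular:
  have regOf : ∀ (S X : SuppSet A) (m : S ⟶ X), Mono m →
      (∀ s, X.supp (m.1 s) = S.supp s) → RegularMono m := by
    intro S X m hm hrefl
    refine ⟨twoObj A, chiMap m, trueMap X, ?_, ?_⟩
    · exact Subtype.ext (funext fun s => (chi_true m (m.1 s)).mpr ⟨s, rfl⟩)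
    · apply Fork.IsLimit.mk'
      intro c
      have hc : ∀ w, ∃ s, m.1 s = c.ι.1 w := by
        intro w
        have := congrFun (congrArg Subtype.val c.condition) w
        exact (chi_true m (c.ι.1 w)).mp this
      refine ⟨⟨fun w => (hc w).choose, ?_⟩, ?_, ?_⟩
      · intro w
        have h1 := (hc w).choose_spec
        calc S.supp (hc w).choose = X.supp (m.1 (hc w).choose) := (hrefl _).symm
          _ = X.supp (c.ι.1 w) := by rw [h1]
          _ ⊆ _ := c.ι.2 w
      · exact Subtype.ext (funext fun w => (hc w).choose_spec)
      · intro l hl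
        apply Subtype.ext; funext w
        apply mono_inj m hm
        rw [(hc w).choose_spec]
        exact congrFun (congrArg Subtype.val hl) w
  constructor
  · intro S X m hm
    constructor
    · rintro ⟨reg⟩ s
      refine subset_antisymm (m.2 s) ?_
      let P := ptObj A (X.supp (m.1 s)) (X.finite _)
      let u : P ⟶ X := ⟨fun _ => m.1 s, fun _ => subset_rfl⟩
      have hw : u ≫ reg.left = u ≫ reg.right := by
        apply Subtype.ext; funext _
        exact congrFun (congrArg Subtype.val reg.w) s
      obtain ⟨k, hk⟩ := Fork.IsLimit.lift' reg.isLimit u hw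
      have hks : k.1 PUnit.unit = s := by
        apply mono_inj m hm
        exact congrFun (congrArg Subtype.val hk) PUnit.unit
      have := k.2 PUnit.unit
      rwa [hks] at this
    · intro hrefl
      exact ⟨regOf S X m hm hrefl⟩
  · intro S X m hm hrefl
    have comm : bangMap S ≫ tMap A = m ≫ chiMap m :=
      Subtype.ext (funext fun s => ((chi_true m (m.1 s)).mpr ⟨s, rfl⟩).symm)
    -- a map χ' fitting in a pullback square equals chiMap m
    have uniq : ∀ χ' : X ⟶ twoObj A, IsPullback (bangMap S) m (tMap A) χ' → χ' = chiMap m := by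
      intro χ' hχ'
      apply Subtype.ext; funext x
      have hiff : χ'.1 x = true ↔ ∃ s, m.1 s = x := by
        constructor
        · intro hx
          let P := ptObj A (X.supp x) (X.finite x)
          let u : P ⟶ X := ⟨fun _ => x, fun _ => subset_rfl⟩
          have hsq : bangMap P ≫ tMap A = u ≫ χ' := by
            apply Subtype.ext; funext _
            exact hx.symm
          exact ⟨(hχ'.lift (bangMap P) u hsq).1 PUnit.unit,
            congrFun (congrArg Subtype.val (hχ'.lift_snd (bangMap P) u hsq)) PUnit.unit⟩
        · rintro ⟨s, rfl⟩
          exact (congrFun (congrArg Subtype.val hχ'.w) s).symm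
      cases h : χ'.1 x with
      | false =>
        cases hcx : (chiMap m).1 x with
        | false => rfl
        | true =>
          have := hiff.mpr ((chi_true m x).mp hcx)
          rw [h] at this
          exact (Bool.false_ne_true this).elim
      | true => exact ((chi_true m x).mpr (hiff.mp h)).symm
    refine ⟨chiMap m, ?_, uniq⟩
    apply IsPullback.of_isLimit' ⟨comm⟩
    apply PullbackCone.IsLimit.mk
    case lift =>
      intro c
      refine ⟨fun w => (snd_mem_range m c w).choose, ?_⟩
      intro w
      calc S.supp (snd_mem_range m c w).choose
          = X.supp (m.1 (snd_mem_range m c w).choose) := (hrefl _).symm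
        _ = X.supp (c.snd.1 w) := by rw [(snd_mem_range m c w).choose_spec]
        _ ⊆ _ := c.snd.2 w
    case fac_left => intro c; apply Subtype.ext; funext _; rfl
    case fac_right =>
      intro c
      exact Subtype.ext (funext fun w => (snd_mem_range m c w).choose_spec)
    case uniq =>
      intro c l _ hsnd
      apply Subtype.ext; funext w
      apply mono_inj m hm
      rw [(snd_mem_range m c w).choose_spec]
      exact congrFun (congrArg Subtype.val hsnd) w
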